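/- Consider instances on the real line: a finite set A of alternatives and districts d with nonempty finite multisets N_d of agent positions. Fix α = (3-√5)/2. Define the mechanism: for each district d, let y_d ∈ A be an alternative minimizing distance to the ⌈α·n_d⌉-th leftmost agent of N_d (where n_d = |N_d|); let w be the rightmost among the representatives y_d. Then for every alternative o ∈ A, max_d (1/n_d) Σ_{i∈N_d} |i - w| ≤ (2+√5) · max_d (1/n_d) Σ_{i∈N_d} |i - o|. -/

import Mathlib

lemma aux_take_le (l : List ℝ) (hs : l.Pairwise (· ≤ ·)) (j : ℕ) (hj : j < l.length) :
    ∀ a ∈ l.take (j+1), a ≤ l[j] := by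
  intro a ha
  rw [List.mem_iff_getElem] at ha
  obtain ⟨i, hi, rfl⟩ := ha
  have hi' : i < j + 1 := lt_of_lt_of_le hi (by simp)
  rw [List.getElem_take]
  rcases eq_or_lt_of_le (Nat.lt_succ_iff.mp hi') with h | h
  · subst h; exact le_refl _
  · exact (List.pairwise_iff_getElem.mp hs) i j (by omega) hj h

lemma aux_drop_ge (l : List ℝ) (hs : l.Pairwise (· ≤ ·)) (j : ℕ) (hj : j < l.length) :
    ∀ a ∈ l.drop j, l[j] ≤ a := by
  intro a ha
  rw [List.mem_iff_getElem] at ha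
  obtain ⟨i, hi, rfl⟩ := ha
  rw [List.getElem_drop]
  rcases Nat.eq_zero_or_pos i with h | h
  · subst h; simp
  · exact (List.pairwise_iff_getElem.mp hs) j (j+i) hj (by simp at hi; omega) (by omega)

lemma aux_sum_const_le (l : List ℝ) (f : ℝ → ℝ) (c : ℝ) (h : ∀ a ∈ l, c ≤ f a) :
    (l.length : ℝ) * c ≤ (l.map f).sum := by
  induction l with
  | nil => simp
  | cons b t ih =>
    simp only [List.map_cons, List.sum_cons, List.length_cons]
    have := ih (fun a ha => h a (List.mem_cons_of_mem _ ha))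
    have hb := h b (List.mem_cons_self)
    push_cast
    nlinarith

lemma aux_sum_map_add (l : List ℝ) (f : ℝ → ℝ) (c : ℝ) :
    (l.map (fun a => f a + c)).sum = (l.map f).sum + l.length * c := by
  induction l with
  | nil => simp
  | cons b t ih => simp [ih]; ring

lemma aux_lb_left (l : List ℝ) (hs : l.Pairwise (· ≤ ·)) (j : ℕ) (hj : j < l.length)
    (o : ℝ) (h : l[j] ≤ o) :
    ((j+1 : ℕ) : ℝ) * (o - l[j]) ≤ (l.map (fun a => |a - o|)).sum := by
  have hTL := aux_take_le l hs j hj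
  have hsplit : (l.map (fun a => |a - o|)).sum
      = ((l.take (j+1)).map (fun a => |a - o|)).sum + ((l.drop (j+1)).map (fun a => |a - o|)).sum := by
    rw [← List.sum_append, ← List.map_append, List.take_append_drop]
  have h1 : (((l.take (j+1)).length : ℕ) : ℝ) * (o - l[j]) ≤ ((l.take (j+1)).map (fun a => |a - o|)).sum := by
    apply aux_sum_const_le
    intro a ha
    have := hTL a ha
    rw [abs_sub_comm, abs_of_nonneg (by linarith)]
    linarith
  have h2 : (0:ℝ) ≤ ((l.drop (j+1)).map (fun a => |a - o|)).sum := by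
    apply List.sum_nonneg; intro a ha
    simp only [List.mem_map] at ha; obtain ⟨b, _, rfl⟩ := ha; exact abs_nonneg _
  have hlen : (l.take (j+1)).length = j+1 := by simp; omega
  rw [hlen] at h1
  linarith

lemma aux_lb_right (l : List ℝ) (hs : l.Pairwise (· ≤ ·)) (j : ℕ) (hj : j < l.length)
    (o : ℝ) (h : o ≤ l[j]) :
    ((l.length - j : ℕ) : ℝ) * (l[j] - o) ≤ (l.map (fun a => |a - o|)).sum := by
  have hDG := aux_drop_ge l hs j hj
  have hsplit : (l.map (fun a => |a - o|)).sum
      = ((l.take j).map (fun a => |a - o|)).sum + ((l.drop j).map (fun a => |a - o|)).sum := by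
    rw [← List.sum_append, ← List.map_append, List.take_append_drop]
  have h1 : (((l.drop j).length : ℕ) : ℝ) * (l[j] - o) ≤ ((l.drop j).map (fun a => |a - o|)).sum := by
    apply aux_sum_const_le
    intro a ha
    have := hDG a ha
    rw [abs_of_nonneg (by linarith)]
    linarith
  have h2 : (0:ℝ) ≤ ((l.take j).map (fun a => |a - o|)).sum := by
    apply List.sum_nonneg; intro a ha
    simp only [List.mem_map] at ha; obtain ⟨b, _, rfl⟩ := ha; exact abs_nonneg _
  have hlen : (l.drop j).length = l.length - j := by simp
  rw [hlen] at h1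
  linarith

lemma aux_ub (l : List ℝ) (hs : l.Pairwise (· ≤ ·)) (j : ℕ) (hj : j < l.length)
    (o w : ℝ) (hwo : w ≤ o) (hw2 : l[j] - w ≤ o - l[j]) :
    (l.map (fun a => |a - w|)).sum
      ≤ (l.map (fun a => |a - o|)).sum + ((l.length - (j+1) : ℕ) : ℝ) * (o - w) := by
  have hTL := aux_take_le l hs j hj
  have hsplit : ∀ z : ℝ, (l.map (fun a => |a - z|)).sum
      = ((l.take (j+1)).map (fun a => |a - z|)).sum + ((l.drop (j+1)).map (fun a => |a - z|)).sum := by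
    intro z
    rw [← List.sum_append, ← List.map_append, List.take_append_drop]
  rw [hsplit w, hsplit o]
  have h1 : ((l.take (j+1)).map (fun a => |a - w|)).sum ≤ ((l.take (j+1)).map (fun a => |a - o|)).sum := by
    apply List.sum_le_sum
    intro a ha
    have hax := hTL a ha
    rcases le_total a w with h' | h'
    · rw [abs_sub_comm a w, abs_of_nonneg (by linarith), abs_sub_comm a o, abs_of_nonneg (by linarith)]
      linarith
    · rw [abs_of_nonneg (by linarith : (0:ℝ) ≤ a - w), abs_sub_comm a o, abs_of_nonneg (by linarith)]
      linarith
  have h2 : ((l.drop (j+1)).map (fun a => |a - w|)).sum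
      ≤ ((l.drop (j+1)).map (fun a => |a - o|)).sum + ((l.drop (j+1)).length : ℝ) * (o - w) := by
    calc ((l.drop (j+1)).map (fun a => |a - w|)).sum
        ≤ ((l.drop (j+1)).map (fun a => |a - o| + (o - w))).sum := by
          apply List.sum_le_sum
          intro a _
          have : |a - w| ≤ |a - o| + |o - w| := by
            calc |a - w| = |(a - o) + (o - w)| := by ring_nf
            _ ≤ |a - o| + |o - w| := abs_add_le _ _
          rw [show |o - w| = o - w from abs_of_nonneg (by linarith)] at this
          exact this
      _ = ((l.drop (j+1)).map (fun a => |a - o|)).sum + ((l.drop (j+1)).length : ℝ) * (o - w) :=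
          aux_sum_map_add _ _ _
  have hlen : (l.drop (j+1)).length = l.length - (j+1) := by simp
  rw [hlen] at h2
  linarith

lemma aux_shift (l : List ℝ) (o w : ℝ) :
    (l.map (fun a => |a - w|)).sum ≤ (l.map (fun a => |a - o|)).sum + (l.length : ℝ) * |w - o| := by
  calc (l.map (fun a => |a - w|)).sum
      ≤ (l.map (fun a => |a - o| + |w - o|)).sum := by
        apply List.sum_le_sum
        intro a _
        calc |a - w| = |(a - o) + (o - w)| := by ring_nf
        _ ≤ |a - o| + |o - w| := abs_add_le _ _
        _ = |a - o| + |w - o| := by rw [abs_sub_comm o w]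
    _ = (l.map (fun a => |a - o|)).sum + (l.length : ℝ) * |w - o| := aux_sum_map_add _ _ _

lemma aux_div_le (c S Nr : ℝ) (hN : 0 < Nr) (h : c * Nr ≤ S) : c ≤ (1/Nr) * S := by
  rw [show (1/Nr)*S = S/Nr by ring]; exact (le_div_iff₀ hN).mpr h

lemma aux_le_div (c S Nr : ℝ) (hN : 0 < Nr) (h : S ≤ c * Nr) : (1/Nr) * S ≤ c := by
  rw [show (1/Nr)*S = S/Nr by ring]; exact (div_le_iff₀ hN).mpr h

theorem stmt_12 (k : ℕ) (A : Finset ℝ)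
    (n : Fin (k + 1) → ℕ) (p : (d : Fin (k + 1)) → Fin (n d + 1) → ℝ)
    (α : ℝ) (hα : α = (3 - Real.sqrt 5) / 2)
    (x : Fin (k + 1) → ℝ)
    (hx : ∀ d, (Multiset.sort
        (Multiset.map (p d) (Finset.univ : Finset (Fin (n d + 1))).val) (· ≤ ·))[⌈α * (n d + 1 : ℕ)⌉₊ - 1]?
      = some (x d))
    (y : Fin (k + 1) → ℝ)
    (hy : ∀ d, y d ∈ A ∧ ∀ a ∈ A, |x d - y d| ≤ |x d - a|)
    (w : ℝ) (hw : w = Finset.univ.sup' Finset.univ_nonempty y)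
    (o : ℝ) (ho : o ∈ A) :
    Finset.univ.sup' Finset.univ_nonempty
        (fun d => (1 / (n d + 1 : ℕ) : ℝ) * ∑ i, |p d i - w|) ≤
      (2 + Real.sqrt 5) *
        Finset.univ.sup' Finset.univ_nonempty
          (fun d => (1 / (n d + 1 : ℕ) : ℝ) * ∑ i, |p d i - o|) := by
  set s5 : ℝ := Real.sqrt 5 with hs5def
  have hs5 : s5 ^ 2 = 5 := Real.sq_sqrt (by norm_num)
  have hs5nn : 0 ≤ s5 := Real.sqrt_nonneg 5
  have hs5a : 2 < s5 := by nlinarith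
  have hs5b : s5 < 3 := by nlinarith
  have hα0 : 0 < α := by rw [hα]; linarith
  have hα1 : α < 1 := by rw [hα]; linarith
  have hid : 2 * (1 - α) = α * (1 + s5) := by rw [hα]; linear_combination (1/2) * hs5
  have hid2 : (1 - α) * (1 + s5) = 2 := by rw [hα]; linear_combination (1/2) * hs5
  -- notation
  set L : (d : Fin (k+1)) → List ℝ :=
    fun d => Multiset.sort (Multiset.map (p d) (Finset.univ : Finset (Fin (n d + 1))).val) (· ≤ ·)
    with hLdef
  set m : Fin (k+1) → ℕ := fun d => ⌈α * ((n d + 1 : ℕ) : ℝ)⌉₊ with hmdef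
  have hLsort : ∀ d, (L d).Pairwise (· ≤ ·) := fun d => Multiset.pairwise_sort _ _
  have hLlen : ∀ d, (L d).length = n d + 1 := by
    intro d
    rw [hLdef]
    simp [Multiset.length_sort]
  have hxd : ∀ d, ∃ h : m d - 1 < (L d).length, (L d)[m d - 1] = x d := by
    intro d
    rw [← List.getElem?_eq_some_iff]
    exact hx d
  have hNpos : ∀ d, (0:ℝ) < ((n d + 1 : ℕ) : ℝ) := by
    intro d; exact_mod_cast Nat.succ_pos (n d)
  have hm_pos : ∀ d, 1 ≤ m d := by
    intro d
    have : 0 < α * ((n d + 1 : ℕ) : ℝ) := mul_pos hα0 (hNpos d)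
    exact Nat.ceil_pos.mpr this
  have hm_leN : ∀ d, m d ≤ n d + 1 := by
    intro d
    obtain ⟨h, -⟩ := hxd d
    rw [hLlen d] at h
    have := hm_pos d
    omega
  have hmlow : ∀ d, α * ((n d + 1 : ℕ) : ℝ) ≤ (m d : ℝ) := fun d => Nat.le_ceil _
  have hmhigh : ∀ d, (m d : ℝ) ≤ α * ((n d + 1 : ℕ) : ℝ) + 1 := by
    intro d
    exact le_of_lt (Nat.ceil_lt_add_one (le_of_lt (mul_pos hα0 (hNpos d))))
  -- sums as list sums
  have hsum : ∀ d (z : ℝ), (∑ i, |p d i - z|) = ((L d).map (fun a => |a - z|)).sum := by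
    intro d z
    have h1 : ((L d).map (fun a => |a - z|)).sum
        = (((L d : List ℝ) : Multiset ℝ).map (fun a => |a - z|)).sum := by simp
    rw [h1, hLdef]
    simp only
    rw [Multiset.sort_eq, Multiset.map_map]
    rfl
  set OPT : ℝ := Finset.univ.sup' Finset.univ_nonempty
      (fun d => (1 / (n d + 1 : ℕ) : ℝ) * ∑ i, |p d i - o|) with hOPTdef
  have hOPT : ∀ d, (1 / ((n d + 1 : ℕ) : ℝ)) * ((L d).map (fun a => |a - o|)).sum ≤ OPT := by
    intro d
    rw [← hsum d o]
    exact Finset.le_sup' (fun d => (1 / (n d + 1 : ℕ) : ℝ) * ∑ i, |p d i - o|) (Finset.mem_univ d)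
  have hSo_nonneg : ∀ d, (0:ℝ) ≤ ((L d).map (fun a => |a - o|)).sum := by
    intro d
    apply List.sum_nonneg; intro a ha
    simp only [List.mem_map] at ha; obtain ⟨b, _, rfl⟩ := ha; exact abs_nonneg _
  have hOPTnn : 0 ≤ OPT := by
    have h0 := hOPT ⟨0, Nat.succ_pos k⟩
    have := hSo_nonneg ⟨0, Nat.succ_pos k⟩
    nlinarith [hNpos (⟨0, Nat.succ_pos k⟩ : Fin (k+1)), one_div_pos.mpr (hNpos (⟨0, Nat.succ_pos k⟩ : Fin (k+1)))]
  have hSo_le : ∀ d, ((L d).map (fun a => |a - o|)).sum ≤ OPT * ((n d + 1 : ℕ) : ℝ) := by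
    intro d
    have h := hOPT d
    have hN := hNpos d
    have h2 := mul_le_mul_of_nonneg_left h (le_of_lt hN)
    have heq : ((n d + 1 : ℕ) : ℝ) * ((1 / ((n d + 1 : ℕ) : ℝ)) * ((L d).map (fun a => |a - o|)).sum)
        = ((L d).map (fun a => |a - o|)).sum := by field_simp
    rw [heq] at h2
    linarith
  -- per-district percentile bounds
  have F1 : ∀ d, x d ≤ o → α * (o - x d) ≤ OPT := by
    intro d hxo
    obtain ⟨hj, hval⟩ := hxd d
    have hlb := aux_lb_left (L d) (hLsort d) (m d - 1) hj o (by rw [hval]; exact hxo)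
    rw [hval] at hlb
    have hj1 : m d - 1 + 1 = m d := by have := hm_pos d; omega
    rw [hj1] at hlb
    have hstep : α * ((n d + 1 : ℕ) : ℝ) * (o - x d) ≤ (m d : ℝ) * (o - x d) :=
      mul_le_mul_of_nonneg_right (hmlow d) (by linarith)
    have hc : α * (o - x d) * ((n d + 1 : ℕ) : ℝ) ≤ ((L d).map (fun a => |a - o|)).sum := by
      calc α * (o - x d) * ((n d + 1 : ℕ) : ℝ) = α * ((n d + 1 : ℕ) : ℝ) * (o - x d) := by ring
      _ ≤ (m d : ℝ) * (o - x d) := hstep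
      _ ≤ _ := hlb
    exact le_trans (aux_div_le _ _ _ (hNpos d) hc) (hOPT d)
  have F2 : ∀ d, o ≤ x d → (1 - α) * (x d - o) ≤ OPT := by
    intro d hox
    obtain ⟨hj, hval⟩ := hxd d
    have hlb := aux_lb_right (L d) (hLsort d) (m d - 1) hj o (by rw [hval]; exact hox)
    rw [hval] at hlb
    have hcast : (((L d).length - (m d - 1) : ℕ) : ℝ) = ((n d + 1 : ℕ) : ℝ) - (m d : ℝ) + 1 := by
      rw [hLlen d]
      have h1 := hm_pos d
      have h2 := hm_leN d
      push_cast [Nat.cast_sub (by omega : m d - 1 ≤ n d + 1), Nat.cast_sub h1]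
      ring
    rw [hcast] at hlb
    have hcnt : (1 - α) * ((n d + 1 : ℕ) : ℝ) ≤ ((n d + 1 : ℕ) : ℝ) - (m d : ℝ) + 1 := by
      have := hmhigh d
      linarith
    have hstep : (1 - α) * ((n d + 1 : ℕ) : ℝ) * (x d - o)
        ≤ (((n d + 1 : ℕ) : ℝ) - (m d : ℝ) + 1) * (x d - o) :=
      mul_le_mul_of_nonneg_right hcnt (by linarith)
    have hc : (1 - α) * (x d - o) * ((n d + 1 : ℕ) : ℝ) ≤ ((L d).map (fun a => |a - o|)).sum := by
      calc (1 - α) * (x d - o) * ((n d + 1 : ℕ) : ℝ)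
          = (1 - α) * ((n d + 1 : ℕ) : ℝ) * (x d - o) := by ring
      _ ≤ (((n d + 1 : ℕ) : ℝ) - (m d : ℝ) + 1) * (x d - o) := hstep
      _ ≤ _ := hlb
    exact le_trans (aux_div_le _ _ _ (hNpos d) hc) (hOPT d)
  -- properties of w
  have hyw : ∀ d, y d ≤ w := by
    intro d; rw [hw]; exact Finset.le_sup' y (Finset.mem_univ d)
  have hxy : ∀ d, |x d - y d| ≤ |x d - o| := fun d => (hy d).2 o ho
  obtain ⟨D, -, hD⟩ := Finset.exists_mem_eq_sup' (Finset.univ_nonempty) y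
  rw [← hw] at hD
  -- main goal
  apply Finset.sup'_le
  intro d _
  have hNd := hNpos d
  rcases le_or_gt o w with hcase | hcase
  · -- w ≥ o
    have hyD := hxy D
    rcases le_total (x D) o with hxDo | hxDo
    · -- then w = o
      have h1 : |x D - o| = o - x D := by rw [abs_sub_comm, abs_of_nonneg (by linarith)]
      have h2 : y D - x D ≤ |x D - y D| := by
        rw [abs_sub_comm]; exact le_abs_self _
      have hwo : w ≤ o := by rw [hD]; linarith [hyD, h1 ▸ hyD]
      have hweq : w = o := le_antisymm hwo hcase
      rw [hweq]
      have h3 := hOPT d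
      rw [hsum d o]
      nlinarith [h3, hOPTnn, hs5nn]
    · -- o ≤ x D
      have h1 : |x D - o| = x D - o := abs_of_nonneg (by linarith)
      have h2 : y D - x D ≤ |x D - y D| := by rw [abs_sub_comm]; exact le_abs_self _
      have hwo2 : w - o ≤ 2 * (x D - o) := by
        rw [hD]
        have := hxy D
        rw [h1] at this
        linarith
      have hF2 := F2 D hxDo
      have hshift := aux_shift (L d) o w
      rw [hLlen d] at hshift
      rw [show |w - o| = w - o from abs_of_nonneg (by linarith)] at hshift
      rw [hsum d w]
      apply aux_le_div _ _ _ hNd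
      have hS := hSo_le d
      have hkey : 2 * (x D - o) ≤ (1 + s5) * OPT := by
        have hmul := mul_le_mul_of_nonneg_left hF2 (show (0:ℝ) ≤ 1 + s5 by linarith)
        have heq : 2 * (x D - o) = (1 + s5) * ((1 - α) * (x D - o)) := by
          linear_combination (o - x D) * hid2
        linarith
      have hwous : 0 ≤ w - o := by linarith
      have hmul2 := mul_le_mul_of_nonneg_left (le_trans hwo2 hkey) (le_of_lt hNd)
      have hrng : (2 + s5) * OPT * ((n d + 1 : ℕ) : ℝ)
          = OPT * ((n d + 1 : ℕ) : ℝ) + ((n d + 1 : ℕ) : ℝ) * ((1 + s5) * OPT) := by ring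
      linarith [hrng.ge, hrng.le]
  · -- w < o
    have hxall : ∀ e, x e ≤ o := by
      intro e
      by_contra hcon
      push_neg at hcon
      have h1 : |x e - o| = x e - o := abs_of_nonneg (by linarith)
      have h2 : x e - y e ≤ |x e - y e| := le_abs_self _
      have := hxy e
      rw [h1] at this
      have := hyw e
      linarith
    have hxdo := hxall d
    have h1 : |x d - o| = o - x d := by rw [abs_sub_comm, abs_of_nonneg (by linarith)]
    have h2 : x d - y d ≤ |x d - y d| := le_abs_self _
    have hxyd := hxy d
    rw [h1] at hxyd
    have hywd := hyw d
    have hw2 : x d - w ≤ o - x d := by linarith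
    have how : o - w ≤ 2 * (o - x d) := by linarith
    obtain ⟨hj, hval⟩ := hxd d
    have hub := aux_ub (L d) (hLsort d) (m d - 1) hj o w (le_of_lt hcase) (by rw [hval]; linarith)
    have hj1 : m d - 1 + 1 = m d := by have := hm_pos d; omega
    rw [hj1] at hub
    have hcast : (((L d).length - m d : ℕ) : ℝ) = ((n d + 1 : ℕ) : ℝ) - (m d : ℝ) := by
      rw [hLlen d]
      push_cast [Nat.cast_sub (hm_leN d)]
      ring
    rw [hcast] at hub
    have hcnt : ((n d + 1 : ℕ) : ℝ) - (m d : ℝ) ≤ (1 - α) * ((n d + 1 : ℕ) : ℝ) := by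
      have := hmlow d
      linarith
    have hF1 := F1 d hxdo
    rw [hsum d w]
    apply aux_le_div _ _ _ hNd
    have hS := hSo_le d
    have hkey : 2 * (1 - α) * (o - x d) ≤ (1 + s5) * OPT := by
      have hmul := mul_le_mul_of_nonneg_left hF1 (show (0:ℝ) ≤ 1 + s5 by linarith)
      have heq : 2 * (1 - α) * (o - x d) = (1 + s5) * (α * (o - x d)) := by
        linear_combination (o - x d) * hid
      linarith
    -- ((n d + 1) - m d) * (o - w) ≤ (1-α) N * 2 (o - x d) ≤ (1+s5) OPT * N
    have ht0 : 0 ≤ o - x d := by linarith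
    have how0 : 0 ≤ o - w := by linarith
    have hprod : (((n d + 1 : ℕ) : ℝ) - (m d : ℝ)) * (o - w)
        ≤ (1 - α) * ((n d + 1 : ℕ) : ℝ) * (2 * (o - x d)) :=
      mul_le_mul hcnt how (by linarith) (mul_nonneg (by linarith) (le_of_lt hNd))
    have hprod2 : (1 - α) * ((n d + 1 : ℕ) : ℝ) * (2 * (o - x d))
        ≤ (1 + s5) * OPT * ((n d + 1 : ℕ) : ℝ) := by
      have h' := mul_le_mul_of_nonneg_right hkey (le_of_lt hNd)
      calc (1 - α) * ((n d + 1 : ℕ) : ℝ) * (2 * (o - x d))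
          = 2 * (1 - α) * (o - x d) * ((n d + 1 : ℕ) : ℝ) := by ring
        _ ≤ (1 + s5) * OPT * ((n d + 1 : ℕ) : ℝ) := h'
    have hfin : (2 + s5) * OPT * ((n d + 1 : ℕ) : ℝ)
        = OPT * ((n d + 1 : ℕ) : ℝ) + (1 + s5) * OPT * ((n d + 1 : ℕ) : ℝ) := by ring
    linarith [hfin.ge, hfin.le]
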